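/- Let H be an infinite-dimensional separable real Hilbert space with a Hilbert basis e : ℕ → H. Let K be a bounded skew-adjoint operator on H (K† = −K) with ∑' n, ‖K (e n)‖² < ∞. Then for every ε > 0 there exists a bounded skew-adjoint operator K' on H of finite rank (the range of K' is a finite-dimensional subspace) such that exp K' fixes every vector orthogonal to the range of K' and ∑' n, ‖(exp K' − exp K) (e n)‖² < ε². In particular, the finite-like orthogonal operators exp K' are dense, in the Hilbert–Schmidt norm, among the operators exp K with K skew-adjoint Hilbert–Schmidt. -/

import Mathlib

open ContinuousLinearMap
open scoped RealInnerProductSpace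

set_option maxHeartbeats 1000000
set_option synthInstance.maxHeartbeats 400000

section stmt3Aux

variable {H : Type*} [NormedAddCommGroup H] [InnerProductSpace ℝ H] [CompleteSpace H]

private lemma stmt3_parseval (e : HilbertBasis ℕ ℝ H) (x : H) :
    HasSum (fun m => ⟪x, e m⟫ ^ 2) (‖x‖ ^ 2) := by
  have h := e.hasSum_inner_mul_inner x x
  rw [real_inner_self_eq_norm_sq] at h
  have hf : (fun m => ⟪x, e m⟫ ^ 2) = fun i => ⟪x, e i⟫ * ⟪e i, x⟫ := by
    funext m; rw [sq, real_inner_comm]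
  rw [hf]; exact h

private lemma stmt3_parseval_enn (e : HilbertBasis ℕ ℝ H) (x : H) :
    ∑' m, ENNReal.ofReal (⟪x, e m⟫ ^ 2) = ENNReal.ofReal (‖x‖ ^ 2) := by
  rw [← ENNReal.ofReal_tsum_of_nonneg (fun m => sq_nonneg _) (stmt3_parseval e x).summable,
    (stmt3_parseval e x).tsum_eq]

/-- HS "norm" is invariant under adjoint, on the ENNReal level. -/
private lemma stmt3_hs_adjoint_enn (e : HilbertBasis ℕ ℝ H) (X : H →L[ℝ] H) :
    ∑' n, ENNReal.ofReal (‖X (e n)‖ ^ 2)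
      = ∑' n, ENNReal.ofReal (‖adjoint X (e n)‖ ^ 2) := by
  calc ∑' n, ENNReal.ofReal (‖X (e n)‖ ^ 2)
      = ∑' n, ∑' m, ENNReal.ofReal (⟪X (e n), e m⟫ ^ 2) := by
        simp_rw [stmt3_parseval_enn]
    _ = ∑' m, ∑' n, ENNReal.ofReal (⟪X (e n), e m⟫ ^ 2) := ENNReal.tsum_comm
    _ = ∑' m, ∑' n, ENNReal.ofReal (⟪adjoint X (e m), e n⟫ ^ 2) := by
        congr 1; funext m; congr 1; funext n
        rw [adjoint_inner_left, real_inner_comm]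
    _ = ∑' m, ENNReal.ofReal (‖adjoint X (e m)‖ ^ 2) := by
        simp_rw [stmt3_parseval_enn]

private lemma stmt3_enn_to_real {f g : ℕ → ℝ} (hf : ∀ n, 0 ≤ f n) (hg : ∀ n, 0 ≤ g n)
    (hfs : Summable f)
    (h : ∑' n, ENNReal.ofReal (g n) = ∑' n, ENNReal.ofReal (f n)) :
    Summable g ∧ ∑' n, g n = ∑' n, f n := by
  have hfin : ∑' n, ENNReal.ofReal (f n) ≠ ⊤ := by
    rw [← ENNReal.ofReal_tsum_of_nonneg hf hfs]; exact ENNReal.ofReal_ne_top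
  have hgs : Summable g := by
    have h2 := ENNReal.summable_toReal (h ▸ hfin)
    refine h2.congr fun n => ?_
    exact ENNReal.toReal_ofReal (hg n)
  refine ⟨hgs, ?_⟩
  have := (ENNReal.ofReal_tsum_of_nonneg hg hgs) ▸ (ENNReal.ofReal_tsum_of_nonneg hf hfs) ▸ h
  exact (ENNReal.ofReal_eq_ofReal_iff (tsum_nonneg hg) (tsum_nonneg hf)).mp this

/-- ENNReal-level bound for HS norm of a right composition. -/
private lemma stmt3_hs_comp_right_enn (e : HilbertBasis ℕ ℝ H) (E R : H →L[ℝ] H) :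
    ∑' n, ENNReal.ofReal (‖(E.comp R) (e n)‖ ^ 2)
      ≤ ENNReal.ofReal (‖R‖ ^ 2) * ∑' n, ENNReal.ofReal (‖E (e n)‖ ^ 2) := by
  rw [stmt3_hs_adjoint_enn e (E.comp R), adjoint_comp, stmt3_hs_adjoint_enn e E]
  rw [← ENNReal.tsum_mul_left]
  refine ENNReal.tsum_le_tsum fun n => ?_
  rw [← ENNReal.ofReal_mul (by positivity)]
  refine ENNReal.ofReal_le_ofReal ?_
  have h1 : ‖(adjoint R).comp (adjoint E) (e n)‖ ≤ ‖R‖ * ‖adjoint E (e n)‖ := by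
    calc ‖adjoint R ((adjoint E) (e n))‖ ≤ ‖adjoint R‖ * ‖adjoint E (e n)‖ :=
          le_opNorm _ _
      _ = ‖R‖ * ‖adjoint E (e n)‖ := by rw [ContinuousLinearMap.adjoint.norm_map R]
  calc ‖(adjoint R).comp (adjoint E) (e n)‖ ^ 2 ≤ (‖R‖ * ‖adjoint E (e n)‖) ^ 2 := by
        exact pow_le_pow_left₀ (norm_nonneg _) h1 2
    _ = ‖R‖ ^ 2 * ‖adjoint E (e n)‖ ^ 2 := by ring

/-- main finite-set bound for `L ∘ E ∘ R`. -/
private lemma stmt3_hs_comp_finset (e : HilbertBasis ℕ ℝ H) (E L R : H →L[ℝ] H)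
    (hE : Summable fun n => ‖E (e n)‖ ^ 2) (s : Finset ℕ) :
    ∑ j ∈ s, ‖(L.comp (E.comp R)) (e j)‖ ^ 2
      ≤ ‖L‖ ^ 2 * ‖R‖ ^ 2 * ∑' n, ‖E (e n)‖ ^ 2 := by
  have key : ENNReal.ofReal (∑ j ∈ s, ‖(L.comp (E.comp R)) (e j)‖ ^ 2)
      ≤ ENNReal.ofReal (‖L‖ ^ 2 * ‖R‖ ^ 2 * ∑' n, ‖E (e n)‖ ^ 2) := by
    rw [ENNReal.ofReal_sum_of_nonneg (fun j _ => sq_nonneg _)]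
    calc ∑ j ∈ s, ENNReal.ofReal (‖(L.comp (E.comp R)) (e j)‖ ^ 2)
        ≤ ∑' j, ENNReal.ofReal (‖(L.comp (E.comp R)) (e j)‖ ^ 2) :=
          ENNReal.sum_le_tsum s
      _ ≤ ENNReal.ofReal (‖L‖ ^ 2) * ∑' j, ENNReal.ofReal (‖(E.comp R) (e j)‖ ^ 2) := by
          rw [← ENNReal.tsum_mul_left]
          refine ENNReal.tsum_le_tsum fun j => ?_
          rw [← ENNReal.ofReal_mul (by positivity)]
          refine ENNReal.ofReal_le_ofReal ?_
          calc ‖L ((E.comp R) (e j))‖ ^ 2 ≤ (‖L‖ * ‖(E.comp R) (e j)‖) ^ 2 :=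
                pow_le_pow_left₀ (norm_nonneg _) (le_opNorm _ _) 2
            _ = ‖L‖ ^ 2 * ‖(E.comp R) (e j)‖ ^ 2 := by ring
      _ ≤ ENNReal.ofReal (‖L‖ ^ 2) *
            (ENNReal.ofReal (‖R‖ ^ 2) * ∑' n, ENNReal.ofReal (‖E (e n)‖ ^ 2)) := by
          exact mul_le_mul_right (stmt3_hs_comp_right_enn e E R) _
      _ = ENNReal.ofReal (‖L‖ ^ 2 * ‖R‖ ^ 2 * ∑' n, ‖E (e n)‖ ^ 2) := by
          rw [mul_assoc, ENNReal.ofReal_mul (by positivity),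
            ENNReal.ofReal_mul (by positivity),
            ENNReal.ofReal_tsum_of_nonneg (fun n => sq_nonneg _) hE]
  exact (ENNReal.ofReal_le_ofReal_iff
    (mul_nonneg (by positivity) (tsum_nonneg fun n => sq_nonneg _))).mp key

/-- evaluation on finitely many basis vectors, as a CLM into `PiLp 2`. -/
private noncomputable def stmt3Phi (e : HilbertBasis ℕ ℝ H) (s : Finset ℕ) :
    (H →L[ℝ] H) →L[ℝ] PiLp 2 (fun _ : s => H) :=
  LinearMap.mkContinuous
    { toFun := fun T => (WithLp.equiv 2 ((_ : s) → H)).symm fun j => T (e j)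
      map_add' := fun T S => by ext j; rfl
      map_smul' := fun c T => by ext j; rfl }
    (Real.sqrt s.card)
    (by
      intro T
      have h1 : ‖(WithLp.equiv 2 ((_ : s) → H)).symm (fun j => T (e j))‖ ^ 2
          ≤ (Real.sqrt s.card * ‖T‖) ^ 2 := by
        rw [PiLp.norm_sq_eq_of_L2]
        have hj : ∀ j : s, ‖T (e j)‖ ^ 2 ≤ ‖T‖ ^ 2 := by
          intro j
          have : ‖T (e j)‖ ≤ ‖T‖ := by
            calc ‖T (e j)‖ ≤ ‖T‖ * ‖(e j : H)‖ := le_opNorm _ _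
              _ = ‖T‖ := by rw [e.orthonormal.1 j]; ring
          exact pow_le_pow_left₀ (norm_nonneg _) this 2
        calc ∑ j : s, ‖T (e j)‖ ^ 2 ≤ ∑ _j : s, ‖T‖ ^ 2 :=
              Finset.sum_le_sum fun j _ => hj j
          _ = s.card * ‖T‖ ^ 2 := by simp [Finset.card_univ]
          _ = (Real.sqrt s.card * ‖T‖) ^ 2 := by
              rw [mul_pow, Real.sq_sqrt (by positivity)]
      exact le_of_pow_le_pow_left₀ two_ne_zero (by positivity) h1)

private lemma stmt3Phi_norm_sq (e : HilbertBasis ℕ ℝ H) (s : Finset ℕ) (T : H →L[ℝ] H) :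
    ‖stmt3Phi e s T‖ ^ 2 = ∑ j ∈ s, ‖T (e j)‖ ^ 2 := by
  rw [show stmt3Phi e s T = (WithLp.equiv 2 ((_ : s) → H)).symm (fun j => T (e j)) from rfl,
    PiLp.norm_sq_eq_of_L2]
  exact Finset.sum_coe_sort s (fun j => ‖T (e j)‖ ^ 2)

/-- Bound on `Φ (L ∘ E ∘ R)`. -/
private lemma stmt3Phi_comp_le (e : HilbertBasis ℕ ℝ H) (s : Finset ℕ) (E L R : H →L[ℝ] H)
    (hE : Summable fun n => ‖E (e n)‖ ^ 2) :
    ‖stmt3Phi e s (L.comp (E.comp R))‖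
      ≤ ‖L‖ * ‖R‖ * Real.sqrt (∑' n, ‖E (e n)‖ ^ 2) := by
  refine le_of_pow_le_pow_left₀ two_ne_zero (by positivity) ?_
  rw [stmt3Phi_norm_sq]
  calc ∑ j ∈ s, ‖(L.comp (E.comp R)) (e j)‖ ^ 2
      ≤ ‖L‖ ^ 2 * ‖R‖ ^ 2 * ∑' n, ‖E (e n)‖ ^ 2 := stmt3_hs_comp_finset e E L R hE s
    _ = (‖L‖ * ‖R‖ * Real.sqrt (∑' n, ‖E (e n)‖ ^ 2)) ^ 2 := by
        rw [mul_pow, mul_pow, Real.sq_sqrt (tsum_nonneg fun n => sq_nonneg _)]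

private lemma stmt3_pow_sub_pow {R : Type*} [Ring R] (a b : R) (n : ℕ) :
    a ^ (n + 1) - b ^ (n + 1)
      = ∑ k ∈ Finset.range (n + 1), a ^ k * (a - b) * b ^ (n - k) := by
  have h := Finset.sum_range_sub (fun k => a ^ k * b ^ (n + 1 - k)) (n + 1)
  simp only [pow_zero, one_mul, Nat.sub_self, mul_one] at h
  rw [Nat.sub_zero] at h
  rw [← h]
  refine Finset.sum_congr rfl fun k hk => ?_
  have hk' : k < n + 1 := Finset.mem_range.mp hk
  have h1 : n + 1 - k = (n - k) + 1 := by omega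
  have h2 : n + 1 - (k + 1) = n - k := by omega
  rw [h1, h2, pow_succ a k, pow_succ' b (n - k)]
  noncomm_ring

private lemma stmt3_opnorm_pow_le (C : H →L[ℝ] H) (M : ℝ) (hC : ‖C‖ ≤ M) :
    ∀ k, ‖C ^ k‖ ≤ M ^ k := by
  intro k
  induction k with
  | zero => rw [pow_zero, pow_zero]; exact norm_id_le
  | succ k ih =>
      calc ‖C ^ (k + 1)‖ = ‖C ^ k * C‖ := by rw [pow_succ]
        _ ≤ ‖C ^ k‖ * ‖C‖ := norm_mul_le _ _
        _ ≤ M ^ k * M := by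
            have hM0 : (0:ℝ) ≤ M := le_trans (norm_nonneg _) hC
            exact mul_le_mul ih hC (norm_nonneg _) (pow_nonneg hM0 k)
        _ = M ^ (k + 1) := by rw [pow_succ]

/-- the key estimate: `‖exp A - exp B‖_HS ≤ (∑ Mⁿ/n!) ‖A - B‖_HS`. -/
private lemma stmt3_hs_exp_diff (e : HilbertBasis ℕ ℝ H) (A B : H →L[ℝ] H) (M : ℝ)
    (hA : ‖A‖ ≤ M) (hB : ‖B‖ ≤ M)
    (hE : Summable fun n => ‖(A - B) (e n)‖ ^ 2) :
    Summable (fun n => ‖(NormedSpace.exp A - NormedSpace.exp B) (e n)‖ ^ 2) ∧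
    ∑' n, ‖(NormedSpace.exp A - NormedSpace.exp B) (e n)‖ ^ 2
      ≤ ((∑' n, M ^ n / n.factorial) * Real.sqrt (∑' n, ‖(A - B) (e n)‖ ^ 2)) ^ 2 := by
  have hM0 : (0:ℝ) ≤ M := le_trans (norm_nonneg _) hA
  set δ := Real.sqrt (∑' n, ‖(A - B) (e n)‖ ^ 2) with hδdef
  have hδ0 : 0 ≤ δ := Real.sqrt_nonneg _
  set CM := ∑' n, M ^ n / (n.factorial : ℝ) with hCMdef
  set g : ℕ → (H →L[ℝ] H) := fun n => ((n.factorial : ℝ))⁻¹ • (A ^ n - B ^ n) with hgdef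
  have hgsum : Summable g := by
    have := (NormedSpace.expSeries_summable' (𝕂 := ℝ) A).sub
      (NormedSpace.expSeries_summable' (𝕂 := ℝ) B)
    refine this.congr fun n => ?_
    simp [hgdef, smul_sub]
  have hD : NormedSpace.exp A - NormedSpace.exp B = ∑' n, g n := by
    simp only [NormedSpace.exp_eq_tsum ℝ]
    rw [← Summable.tsum_sub (NormedSpace.expSeries_summable' (𝕂 := ℝ) A)
      (NormedSpace.expSeries_summable' (𝕂 := ℝ) B)]
    refine tsum_congr fun n => ?_
    simp [hgdef, smul_sub]
  have hsummul : Summable fun n : ℕ => (M ^ n / (n.factorial : ℝ)) * δ :=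
    (Real.summable_pow_div_factorial M).mul_right δ
  have key : ∀ s : Finset ℕ,
      ∑ j ∈ s, ‖(NormedSpace.exp A - NormedSpace.exp B) (e j)‖ ^ 2 ≤ (CM * δ) ^ 2 := by
    intro s
    have hΦsum : Summable fun n => stmt3Phi e s (g n) :=
      (hgsum.hasSum.mapL (stmt3Phi e s)).summable
    have hterm : ∀ n, ‖stmt3Phi e s (g (n + 1))‖ ≤ (M ^ n / (n.factorial : ℝ)) * δ := by
      intro n
      have hgeq : g (n + 1) = (((n + 1).factorial : ℝ))⁻¹ •
          ∑ k ∈ Finset.range (n + 1), (A ^ k).comp ((A - B).comp (B ^ (n - k))) := by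
        rw [hgdef]
        simp only
        rw [stmt3_pow_sub_pow A B n]
        rfl
      rw [hgeq, map_smul, norm_smul, map_sum]
      have hin : ∀ k ∈ Finset.range (n + 1),
          ‖stmt3Phi e s ((A ^ k).comp ((A - B).comp (B ^ (n - k))))‖ ≤ M ^ n * δ := by
        intro k hk
        have hk' : k ≤ n := Nat.lt_succ_iff.mp (Finset.mem_range.mp hk)
        calc ‖stmt3Phi e s ((A ^ k).comp ((A - B).comp (B ^ (n - k))))‖
            ≤ ‖A ^ k‖ * ‖B ^ (n - k)‖ * δ := stmt3Phi_comp_le e s _ _ _ hE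
          _ ≤ M ^ k * M ^ (n - k) * δ := by
              have h1 := stmt3_opnorm_pow_le A M hA k
              have h2 := stmt3_opnorm_pow_le B M hB (n - k)
              have := mul_le_mul h1 h2 (norm_nonneg _) (pow_nonneg hM0 k)
              exact mul_le_mul_of_nonneg_right this hδ0
          _ = M ^ n * δ := by rw [← pow_add, Nat.add_sub_cancel' hk']
      have hsum : ‖∑ k ∈ Finset.range (n + 1),
            stmt3Phi e s ((A ^ k).comp ((A - B).comp (B ^ (n - k))))‖
          ≤ (n + 1 : ℝ) * (M ^ n * δ) := by
        calc _ ≤ ∑ k ∈ Finset.range (n + 1),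
              ‖stmt3Phi e s ((A ^ k).comp ((A - B).comp (B ^ (n - k))))‖ := norm_sum_le _ _
          _ ≤ ∑ _k ∈ Finset.range (n + 1), M ^ n * δ := Finset.sum_le_sum hin
          _ = (n + 1 : ℝ) * (M ^ n * δ) := by
              rw [Finset.sum_const, Finset.card_range]; push_cast; ring
      have hnorminv : ‖(((n + 1).factorial : ℝ))⁻¹‖ = (((n + 1).factorial : ℝ))⁻¹ := by
        rw [norm_inv, Real.norm_natCast]
      rw [hnorminv]
      calc (((n + 1).factorial : ℝ))⁻¹ * ‖∑ k ∈ Finset.range (n + 1),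
            stmt3Phi e s ((A ^ k).comp ((A - B).comp (B ^ (n - k))))‖
          ≤ (((n + 1).factorial : ℝ))⁻¹ * ((n + 1 : ℝ) * (M ^ n * δ)) :=
            mul_le_mul_of_nonneg_left hsum (by positivity)
        _ = (M ^ n / (n.factorial : ℝ)) * δ := by
            rw [Nat.factorial_succ]
            push_cast
            have h1 : ((n.factorial : ℝ)) ≠ 0 := Nat.cast_ne_zero.mpr n.factorial_ne_zero
            have h2 : ((n : ℝ) + 1) ≠ 0 := by positivity
            field_simp
    have hnorms : Summable fun n => ‖stmt3Phi e s (g (n + 1))‖ :=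
      Summable.of_nonneg_of_le (fun n => norm_nonneg _) hterm hsummul
    have h1 : ‖stmt3Phi e s (NormedSpace.exp A - NormedSpace.exp B)‖ ≤ CM * δ := by
      rw [hD]
      set b : ℕ → ℝ := fun n => match n with
        | 0 => 0
        | (m + 1) => M ^ m / (m.factorial : ℝ) * δ with hbdef
      have hbsum : Summable b := by
        rw [← summable_nat_add_iff 1]
        exact hsummul.congr fun n => rfl
      have hbtsum : ∑' n, b n = CM * δ := by
        rw [Summable.tsum_eq_zero_add hbsum]
        have hb1 : ∑' n : ℕ, b (n + 1) = CM * δ := by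
          have hb2 : (fun n : ℕ => b (n + 1))
              = fun n : ℕ => M ^ n / (n.factorial : ℝ) * δ := rfl
          rw [hb2, tsum_mul_right]
        rw [hb1]
        simp [hbdef]
      have htermb : ∀ i, ‖stmt3Phi e s (g i)‖ ≤ b i := by
        intro i
        match i with
        | 0 =>
          have hg0 : g 0 = 0 := by simp [hgdef]
          simp [hg0, hbdef]
        | (m + 1) => exact hterm m
      have hhs : HasSum (fun n => stmt3Phi e s (g n)) (stmt3Phi e s (∑' n, g n)) :=
        hgsum.hasSum.mapL (stmt3Phi e s)
      have htend := hhs.norm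
      refine le_of_tendsto htend (Filter.Eventually.of_forall fun u => ?_)
      calc ‖∑ i ∈ u, stmt3Phi e s (g i)‖ ≤ ∑ i ∈ u, ‖stmt3Phi e s (g i)‖ := norm_sum_le _ _
        _ ≤ ∑ i ∈ u, b i := Finset.sum_le_sum fun i _ => htermb i
        _ ≤ ∑' n, b n := Summable.sum_le_tsum u (fun i _ => le_trans (norm_nonneg _) (htermb i)) hbsum
        _ = CM * δ := hbtsum
    calc ∑ j ∈ s, ‖(NormedSpace.exp A - NormedSpace.exp B) (e j)‖ ^ 2
        = ‖stmt3Phi e s (NormedSpace.exp A - NormedSpace.exp B)‖ ^ 2 :=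
          (stmt3Phi_norm_sq e s _).symm
      _ ≤ (CM * δ) ^ 2 := pow_le_pow_left₀ (norm_nonneg _) h1 2
  have hsummable := summable_of_sum_le (c := (CM * δ) ^ 2) (fun n => sq_nonneg _) key
  exact ⟨hsummable, Summable.tsum_le_of_sum_le hsummable key⟩

private lemma stmt3_exp_fix (A : H →L[ℝ] H) (v : H) (hv : A v = 0) :
    NormedSpace.exp A v = v := by
  have h := NormedSpace.expSeries_summable' (𝕂 := ℝ) A
  have happ : NormedSpace.exp A v = ∑' n, ((n.factorial : ℝ))⁻¹ • (A ^ n) v := by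
    rw [NormedSpace.exp_eq_tsum ℝ]
    have h2 := (ContinuousLinearMap.apply ℝ H v).map_tsum h
    simpa using h2
  rw [happ, tsum_eq_single 0]
  · simp
  · intro n hn
    obtain ⟨m, rfl⟩ := Nat.exists_eq_succ_of_ne_zero hn
    rw [pow_succ, ContinuousLinearMap.mul_apply, hv, map_zero, smul_zero]

end stmt3Aux

/-- Finite-like orthogonal operators are Hilbert–Schmidt dense among exponentials of
skew-adjoint Hilbert–Schmidt operators: for any skew-adjoint Hilbert–Schmidt `K` and
`ε > 0` there is a finite-rank skew-adjoint `K'` whose exponential fixes everything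
orthogonal to its range and with `‖exp K' − exp K‖_HS < ε`. -/
theorem stmt_3 {H : Type*} [NormedAddCommGroup H] [InnerProductSpace ℝ H] [CompleteSpace H]
    (e : HilbertBasis ℕ ℝ H)
    (K : H →L[ℝ] H)
    (hK : adjoint K = -K)
    (hHS : Summable fun n => ‖K (e n)‖ ^ 2) :
    ∀ ε > (0 : ℝ),
      ∃ K' : H →L[ℝ] H,
        adjoint K' = -K' ∧
        FiniteDimensional ℝ (LinearMap.range (K' : H →ₗ[ℝ] H)) ∧
        (∀ v : H, v ∈ (LinearMap.range (K' : H →ₗ[ℝ] H))ᗮ →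
          NormedSpace.exp K' v = v) ∧
        Summable (fun n => ‖(NormedSpace.exp K' - NormedSpace.exp K) (e n)‖ ^ 2) ∧
        ∑' n, ‖(NormedSpace.exp K' - NormedSpace.exp K) (e n)‖ ^ 2 < ε ^ 2 := by
  intro ε hε
  set M := ‖K‖ with hMdef
  set CM := ∑' n, M ^ n / (n.factorial : ℝ) with hCMdef
  have hCMsum : Summable fun n : ℕ => M ^ n / (n.factorial : ℝ) :=
    Real.summable_pow_div_factorial M
  have hCM1 : (1:ℝ) ≤ CM := by
    have h0 := Summable.le_tsum hCMsum 0 (fun i _ => by positivity)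
    simpa using h0
  have hCMpos : (0:ℝ) < CM := lt_of_lt_of_le one_pos hCM1
  set η := (ε / (2 * CM)) ^ 2 with hηdef
  have hηpos : 0 < η := by positivity
  -- choose N with small tail
  set f : ℕ → ℝ := fun n => ‖K (e n)‖ ^ 2 with hfdef
  have hftail : ∃ N : ℕ, ∑' k, f (k + N) < η := by
    have h1 : Filter.Tendsto (fun N => ∑ i ∈ Finset.range N, f i)
        Filter.atTop (nhds (∑' n, f n)) := hHS.hasSum.tendsto_sum_nat
    have h2 : Filter.Tendsto (fun N => ∑' n, f n - ∑ i ∈ Finset.range N, f i)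
        Filter.atTop (nhds 0) := by
      have := (tendsto_const_nhds (x := ∑' n, f n)).sub h1
      simpa using this
    have h3 : ∀ᶠ N in Filter.atTop,
        ∑' n, f n - ∑ i ∈ Finset.range N, f i < η := by
      exact h2.eventually_lt_const hηpos
    obtain ⟨N, hN⟩ := h3.exists
    refine ⟨N, ?_⟩
    have h4 := Summable.sum_add_tsum_nat_add N hHS
    have : ∑' k, f (k + N) = ∑' n, f n - ∑ i ∈ Finset.range N, f i := by
      linarith [h4]
    rw [this]; exact hN
  obtain ⟨N, hN⟩ := hftail
  -- the finite-dimensional subspace and projection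
  set U : Submodule ℝ H := Submodule.span ℝ (e '' Set.Iio N) with hUdef
  haveI : FiniteDimensional ℝ U :=
    FiniteDimensional.span_of_finite ℝ ((Set.finite_Iio N).image e)
  haveI : CompleteSpace U := FiniteDimensional.complete ℝ U
  set P : H →L[ℝ] H := U.subtypeL.comp (U.orthogonalProjectionOnto) with hPdef
  have hP_mem : ∀ x, P x ∈ U := fun x => (U.orthogonalProjectionOnto x).2
  have hP_eq : ∀ n < N, P (e n) = e n := by
    intro n hn
    exact Submodule.starProjection_eq_self_iff.mpr (Submodule.subset_span ⟨n, hn, rfl⟩)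
  have hP_zero : ∀ n, N ≤ n → P (e n) = 0 := by
    intro n hn
    have hmem : e n ∈ Uᗮ := by
      rw [hUdef, Submodule.mem_orthogonal]
      intro u hu
      refine Submodule.span_induction ?_ ?_ ?_ ?_ hu
      · rintro x ⟨m, hm, rfl⟩
        exact e.orthonormal.2 (by simp at hm; omega)
      · simp
      · intro x y _ _ hx hy; rw [inner_add_left, hx, hy, add_zero]
      · intro c x _ hx; rw [inner_smul_left, hx, mul_zero]
    have h0 : U.orthogonalProjectionOnto (e n) = 0 :=
      Submodule.orthogonalProjectionOnto_apply_of_mem_orthogonal hmem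
    simp [hPdef, h0]
  have hPnorm : ‖P‖ ≤ 1 := by
    refine opNorm_le_bound _ zero_le_one fun x => ?_
    rw [one_mul]
    calc ‖P x‖ = ‖U.orthogonalProjectionOnto x‖ := by simp [hPdef]
      _ ≤ ‖U.orthogonalProjectionOnto‖ * ‖x‖ := le_opNorm _ _
      _ ≤ 1 * ‖x‖ :=
          mul_le_mul_of_nonneg_right (Submodule.orthogonalProjectionOnto_norm_le U) (norm_nonneg x)
      _ = ‖x‖ := one_mul _
  have hPsa : adjoint P = P := by
    have h := isSelfAdjoint_starProjection U
    rw [← star_eq_adjoint]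
    exact h
  set K' : H →L[ℝ] H := P.comp (K.comp P) with hK'def
  -- skew-adjointness
  have hadj : adjoint K' = -K' := by
    rw [hK'def, adjoint_comp, adjoint_comp, hPsa, hK]
    ext x
    simp
  -- finite rank
  have hrange : LinearMap.range (K' : H →ₗ[ℝ] H) ≤ U := by
    rintro x ⟨y, rfl⟩
    exact hP_mem _
  haveI hfin : FiniteDimensional ℝ (LinearMap.range (K' : H →ₗ[ℝ] H)) :=
    Submodule.finiteDimensional_of_le hrange
  -- norm bound
  have hK'norm : ‖K'‖ ≤ M := by
    have h1 : ‖K'‖ ≤ ‖P‖ * (‖K‖ * ‖P‖) :=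
      le_trans (opNorm_comp_le _ _)
        (mul_le_mul_of_nonneg_left (opNorm_comp_le _ _) (norm_nonneg _))
    have h0 : (0:ℝ) ≤ ‖K‖ := norm_nonneg _
    rw [hMdef]
    calc ‖K'‖ ≤ ‖P‖ * (‖K‖ * ‖P‖) := h1
      _ ≤ 1 * (‖K‖ * 1) := by
          refine mul_le_mul hPnorm ?_ (by positivity) zero_le_one
          exact mul_le_mul_of_nonneg_left hPnorm h0
      _ = ‖K‖ := by ring
  -- HS estimate on K' - K
  set gN : ℕ → ℝ := fun n => if n < N then 0 else f n with hgNdef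
  have hgN_nonneg : ∀ n, 0 ≤ gN n := by
    intro n; rw [hgNdef]; dsimp only; split
    · exact le_refl 0
    · exact sq_nonneg _
  have hgNsum : Summable gN := by
    refine Summable.of_nonneg_of_le hgN_nonneg (fun n => ?_) hHS
    rw [hgNdef]; dsimp only; split
    · exact sq_nonneg _
    · exact le_refl _
  have hgNtail : ∑' n, gN n < η := by
    have h4 := Summable.sum_add_tsum_nat_add N hgNsum
    have h5 : ∑ i ∈ Finset.range N, gN i = 0 := by
      refine Finset.sum_eq_zero fun i hi => ?_
      rw [hgNdef]; simp [Finset.mem_range.mp hi]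
    have h6 : ∑' k, gN (k + N) = ∑' k, f (k + N) := by
      refine tsum_congr fun k => ?_
      rw [hgNdef]; simp
    rw [h5, zero_add, h6] at h4
    rw [← h4]; exact hN
  set T1 : H →L[ℝ] H := K.comp P - K with hT1def
  have hT1_eq : ∀ n, ‖T1 (e n)‖ ^ 2 = gN n := by
    intro n
    by_cases hn : n < N
    · have : T1 (e n) = 0 := by
        simp only [hT1def, ContinuousLinearMap.sub_apply, ContinuousLinearMap.comp_apply]
        rw [hP_eq n hn, sub_self]
      rw [this, hgNdef]; simp [hn]
    · have : T1 (e n) = -(K (e n)) := by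
        simp only [hT1def, ContinuousLinearMap.sub_apply, ContinuousLinearMap.comp_apply]
        rw [hP_zero n (le_of_not_gt hn), map_zero, zero_sub]
      rw [this, hgNdef, norm_neg]; simp [hn, hfdef]
  set S : H →L[ℝ] H := P.comp K - K with hSdef
  have hSadj : adjoint S = -T1 := by
    rw [hSdef, map_sub, adjoint_comp, hPsa, hK, hT1def]
    ext x
    simp
    abel
  set T2 : H →L[ℝ] H := S.comp P with hT2def
  have hsplit : K' - K = T2 + T1 := by
    ext x
    simp only [hK'def, hT2def, hSdef, hT1def, ContinuousLinearMap.sub_apply,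
      ContinuousLinearMap.add_apply, ContinuousLinearMap.comp_apply]
    abel
  -- ENNReal computations
  have hT1enn : ∑' n, ENNReal.ofReal (‖T1 (e n)‖ ^ 2) = ∑' n, ENNReal.ofReal (gN n) := by
    refine tsum_congr fun n => ?_; rw [hT1_eq]
  have hSenn : ∑' n, ENNReal.ofReal (‖S (e n)‖ ^ 2) = ∑' n, ENNReal.ofReal (gN n) := by
    rw [stmt3_hs_adjoint_enn e S, hSadj]
    refine tsum_congr fun n => ?_
    rw [ContinuousLinearMap.neg_apply, norm_neg, hT1_eq]
  have hT2enn : ∑' n, ENNReal.ofReal (‖T2 (e n)‖ ^ 2) ≤ ∑' n, ENNReal.ofReal (gN n) := by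
    calc ∑' n, ENNReal.ofReal (‖T2 (e n)‖ ^ 2)
        ≤ ENNReal.ofReal (‖P‖ ^ 2) * ∑' n, ENNReal.ofReal (‖S (e n)‖ ^ 2) :=
          stmt3_hs_comp_right_enn e S P
      _ ≤ 1 * ∑' n, ENNReal.ofReal (‖S (e n)‖ ^ 2) := by
          refine mul_le_mul_left ?_ _
          rw [show (1 : ENNReal) = ENNReal.ofReal 1 by simp]
          exact ENNReal.ofReal_le_ofReal (by nlinarith [norm_nonneg P])
      _ = ∑' n, ENNReal.ofReal (gN n) := by rw [one_mul, hSenn]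
  have hEenn : ∑' n, ENNReal.ofReal (‖(K' - K) (e n)‖ ^ 2)
      ≤ ∑' n, ENNReal.ofReal (4 * gN n) := by
    have hterm : ∀ n, ENNReal.ofReal (‖(K' - K) (e n)‖ ^ 2)
        ≤ ENNReal.ofReal (2 * ‖T2 (e n)‖ ^ 2) + ENNReal.ofReal (2 * ‖T1 (e n)‖ ^ 2) := by
      intro n
      rw [← ENNReal.ofReal_add (by positivity) (by positivity)]
      refine ENNReal.ofReal_le_ofReal ?_
      have h1 : ‖(K' - K) (e n)‖ ≤ ‖T2 (e n)‖ + ‖T1 (e n)‖ := by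
        rw [hsplit]
        exact norm_add_le _ _
      nlinarith [h1, norm_nonneg ((K' - K) (e n)), norm_nonneg (T2 (e n)),
        norm_nonneg (T1 (e n)), sq_nonneg (‖T2 (e n)‖ - ‖T1 (e n)‖)]
    calc ∑' n, ENNReal.ofReal (‖(K' - K) (e n)‖ ^ 2)
        ≤ ∑' n, (ENNReal.ofReal (2 * ‖T2 (e n)‖ ^ 2) + ENNReal.ofReal (2 * ‖T1 (e n)‖ ^ 2)) :=
          ENNReal.tsum_le_tsum hterm
      _ = ∑' n, ENNReal.ofReal (2 * ‖T2 (e n)‖ ^ 2)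
            + ∑' n, ENNReal.ofReal (2 * ‖T1 (e n)‖ ^ 2) := ENNReal.tsum_add
      _ = ENNReal.ofReal 2 * ∑' n, ENNReal.ofReal (‖T2 (e n)‖ ^ 2)
            + ENNReal.ofReal 2 * ∑' n, ENNReal.ofReal (‖T1 (e n)‖ ^ 2) := by
          rw [← ENNReal.tsum_mul_left, ← ENNReal.tsum_mul_left]
          congr 1
          · exact tsum_congr fun n => ENNReal.ofReal_mul (by norm_num)
          · exact tsum_congr fun n => ENNReal.ofReal_mul (by norm_num)
      _ ≤ ENNReal.ofReal 2 * ∑' n, ENNReal.ofReal (gN n)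
            + ENNReal.ofReal 2 * ∑' n, ENNReal.ofReal (gN n) := by
          refine add_le_add (mul_le_mul_right hT2enn _) ?_
          rw [hT1enn]
      _ = ∑' n, ENNReal.ofReal (4 * gN n) := by
          rw [← two_mul, ← mul_assoc, ← ENNReal.tsum_mul_left]
          refine tsum_congr fun n => ?_
          rw [ENNReal.ofReal_mul (by norm_num : (0:ℝ) ≤ 4),
            show (2 : ENNReal) * ENNReal.ofReal 2 = ENNReal.ofReal 4 by
              rw [show (2 : ENNReal) = ENNReal.ofReal 2 from (ENNReal.ofReal_ofNat 2).symm,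
                ← ENNReal.ofReal_mul (by norm_num)]
              norm_num]
  have h4gNsum : Summable fun n => 4 * gN n := hgNsum.mul_left 4
  -- summability of ‖(K' - K)(e n)‖²
  have hEfin : ∑' n, ENNReal.ofReal (4 * gN n) ≠ ⊤ := by
    rw [← ENNReal.ofReal_tsum_of_nonneg (fun n => mul_nonneg (by norm_num) (hgN_nonneg n)) h4gNsum]
    exact ENNReal.ofReal_ne_top
  have hEsum : Summable fun n => ‖(K' - K) (e n)‖ ^ 2 := by
    have h2 := ENNReal.summable_toReal (lt_of_le_of_lt hEenn (lt_top_iff_ne_top.mpr hEfin)).ne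
    refine h2.congr fun n => ?_
    exact ENNReal.toReal_ofReal (sq_nonneg _)
  have hEle : ∑' n, ‖(K' - K) (e n)‖ ^ 2 ≤ 4 * ∑' n, gN n := by
    have h1 : ENNReal.ofReal (∑' n, ‖(K' - K) (e n)‖ ^ 2)
        ≤ ENNReal.ofReal (4 * ∑' n, gN n) := by
      rw [ENNReal.ofReal_tsum_of_nonneg (fun n => sq_nonneg _) hEsum]
      calc ∑' n, ENNReal.ofReal (‖(K' - K) (e n)‖ ^ 2)
          ≤ ∑' n, ENNReal.ofReal (4 * gN n) := hEenn
        _ = ENNReal.ofReal (∑' n, 4 * gN n) :=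
            (ENNReal.ofReal_tsum_of_nonneg
              (fun n => mul_nonneg (by norm_num) (hgN_nonneg n)) h4gNsum).symm
        _ = ENNReal.ofReal (4 * ∑' n, gN n) := by rw [tsum_mul_left]
    exact (ENNReal.ofReal_le_ofReal_iff
      (by have : 0 ≤ ∑' n, gN n := tsum_nonneg hgN_nonneg; linarith)).mp h1
  -- apply the exponential bound
  obtain ⟨hDsum, hDle⟩ := stmt3_hs_exp_diff e K' K M hK'norm (le_refl M) hEsum
  refine ⟨K', hadj, hfin, ?_, hDsum, ?_⟩
  · -- exp K' fixes the orthogonal complement of the range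
    intro v hv
    have h0 : ∀ u ∈ LinearMap.range (K' : H →ₗ[ℝ] H), ⟪u, v⟫ = 0 :=
      (Submodule.mem_orthogonal _ v).mp hv
    have hKv : K' v = 0 := by
      have h1 : ⟪K' v, K' v⟫ = 0 := by
        have h2 : ⟪adjoint K' (K' v), v⟫ = ⟪K' v, K' v⟫ := adjoint_inner_left K' v (K' v)
        rw [hadj] at h2
        have h3 : ⟪K' (K' v), v⟫ = 0 := h0 _ ⟨K' v, rfl⟩
        rw [ContinuousLinearMap.neg_apply, inner_neg_left, h3, neg_zero] at h2
        exact h2.symm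
      exact inner_self_eq_zero.mp h1
    exact stmt3_exp_fix K' v hKv
  · -- the quantitative bound
    have hδle : Real.sqrt (∑' n, ‖(K' - K) (e n)‖ ^ 2) < 2 * (ε / (2 * CM)) := by
      have h1 : ∑' n, ‖(K' - K) (e n)‖ ^ 2 < 4 * η := by
        calc ∑' n, ‖(K' - K) (e n)‖ ^ 2 ≤ 4 * ∑' n, gN n := hEle
          _ < 4 * η := by linarith [hgNtail]
      calc Real.sqrt (∑' n, ‖(K' - K) (e n)‖ ^ 2) < Real.sqrt (4 * η) := by
            refine Real.sqrt_lt_sqrt (tsum_nonneg fun n => sq_nonneg _) h1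
        _ = 2 * (ε / (2 * CM)) := by
            rw [hηdef, show (4:ℝ) * (ε / (2 * CM)) ^ 2 = (2 * (ε / (2 * CM))) ^ 2 by ring,
              Real.sqrt_sq (by positivity)]
    calc ∑' n, ‖(NormedSpace.exp K' - NormedSpace.exp K) (e n)‖ ^ 2
        ≤ (CM * Real.sqrt (∑' n, ‖(K' - K) (e n)‖ ^ 2)) ^ 2 := hDle
      _ < ε ^ 2 := by
          have h2 : CM * Real.sqrt (∑' n, ‖(K' - K) (e n)‖ ^ 2) < ε := by
            have h3 : CM * Real.sqrt (∑' n, ‖(K' - K) (e n)‖ ^ 2)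
                < CM * (2 * (ε / (2 * CM))) :=
              mul_lt_mul_of_pos_left hδle hCMpos
            have h4 : CM * (2 * (ε / (2 * CM))) = ε := by
              field_simp
            linarith
          have h5 : 0 ≤ CM * Real.sqrt (∑' n, ‖(K' - K) (e n)‖ ^ 2) := by positivity
          nlinarith
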